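/- arXiv:2303.18045 — 3 statements merged into one kernel-verified Lean document; each statement's English description precedes it below -/
import Mathlib

section
/- Let t > 0 and let ω be an ℕ-valued geometric random variable with P(ω = j) = e^{-jt}·(1 − e^{-t}) for j ∈ ℕ. Then the third absolute central moment satisfies E[|ω − E[ω]|³] ≤ 3·e^{-t}/(1 − e^{-t})³. -/
open MeasureTheory ProbabilityTheory Real

noncomputable section

lemma nat_integral_eq {Ω : Type} [MeasurableSpace Ω] (P : Measure Ω) [IsProbabilityMeasure P]
    (ω : Ω → ℕ) (hmeas : Measurable ω) (c : ℕ → ℝ) (hc : ∀ j, 0 ≤ c j)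
    (hlaw : ∀ j : ℕ, P {a | ω a = j} = ENNReal.ofReal (c j))
    (f : ℕ → ℝ) (hf : ∀ j, 0 ≤ f j) {L : ℝ} (hs : HasSum (fun j => c j * f j) L) :
    Integrable (fun a => f (ω a)) P ∧ ∫ a, f (ω a) ∂P = L := by
  set μ := P.map ω with hμdef
  have hμ : ∀ j : ℕ, μ {j} = ENNReal.ofReal (c j) := by
    intro j
    rw [hμdef, Measure.map_apply hmeas (measurableSet_singleton j)]
    convert hlaw j using 2
    rfl
  have hint : Integrable f μ := by
    refine ⟨measurable_from_top.aestronglyMeasurable, ?_⟩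
    rw [HasFiniteIntegral]
    calc ∫⁻ a, ‖f a‖₊ ∂μ = ∑' a, (‖f a‖₊ : ENNReal) * μ {a} := lintegral_countable' _
    _ = ∑' a, ENNReal.ofReal (c a * f a) := by
        refine tsum_congr fun a => ?_
        rw [hμ a, ← ENNReal.ofReal_coe_nnreal, coe_nnnorm, norm_of_nonneg (hf a),
          ← ENNReal.ofReal_mul (hf a), mul_comm]
    _ = ENNReal.ofReal L := by
        rw [← ENNReal.ofReal_tsum_of_nonneg (fun n => mul_nonneg (hc n) (hf n)) hs.summable,
          hs.tsum_eq]
    _ < ⊤ := ENNReal.ofReal_lt_top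
  have hio : Integrable (fun a => f (ω a)) P := by
    have := (integrable_map_measure measurable_from_top.aestronglyMeasurable
      hmeas.aemeasurable).mp hint
    exact this
  refine ⟨hio, ?_⟩
  rw [← integral_map hmeas.aemeasurable measurable_from_top.aestronglyMeasurable]
  rw [integral_countable' hint]
  rw [← hs.tsum_eq]
  refine tsum_congr fun a => ?_
  rw [measureReal_def, hμ a, ENNReal.toReal_ofReal (hc a), smul_eq_mul]

section

lemma hs0 {q : ℝ} (hq0 : 0 < q) (hq1 : q < 1) : HasSum (fun n : ℕ => q^n) (1/(1-q)) := by
  simpa [one_div] using hasSum_geometric_of_lt_one hq0.le hq1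

lemma hs1 {q : ℝ} (hq0 : 0 < q) (hq1 : q < 1) : HasSum (fun n : ℕ => (n:ℝ)*q^n) (q/(1-q)^2) :=
  hasSum_coe_mul_geometric_of_norm_lt_one (by rw [norm_eq_abs, abs_of_pos hq0]; exact hq1)

lemma hsummable {q : ℝ} (hq0 : 0 < q) (hq1 : q < 1) (k : ℕ) : Summable (fun n : ℕ => (n:ℝ)^k * q^n) :=
  summable_pow_mul_geometric_of_norm_lt_one k (by rw [norm_eq_abs, abs_of_pos hq0]; exact hq1)

lemma hshift {q : ℝ} (hq0 : 0 < q) (hq1 : q < 1) (k : ℕ) (hk : 0 < k) :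
    HasSum (fun n : ℕ => ((n:ℝ)+1)^k * q^(n+1)) (∑' n : ℕ, (n:ℝ)^k * q^n) := by
  have H := (hsummable hq0 hq1 k).hasSum
  have := (hasSum_nat_add_iff (f := fun n : ℕ => (n:ℝ)^k * q^n) 1).mpr (by
    simpa [zero_pow hk.ne'] using H)
  convert this using 2 with n
  · rfl
  push_cast
  ring

lemma hs2 {q : ℝ} (hq0 : 0 < q) (hq1 : q < 1) : HasSum (fun n : ℕ => (n:ℝ)^2*q^n) (q*(1+q)/(1-q)^3) := by
  have hp : (1:ℝ) - q ≠ 0 := by linarith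
  have H := (hsummable hq0 hq1 2).hasSum
  set T := ∑' n : ℕ, (n:ℝ)^2 * q^n with hT
  have Hc : HasSum (fun n : ℕ => ((n:ℝ)+1)^2 * q^(n+1))
      (q*T + (2*q*(q/(1-q)^2) + q*(1/(1-q)))) := by
    have := (H.mul_left q).add (((hs1 hq0 hq1).mul_left (2*q)).add ((hs0 hq0 hq1).mul_left q))
    convert this using 1
    · rfl
    · funext n; ring
  have heq := (hshift hq0 hq1 2 (by norm_num)).unique Hc
  have hTval : T = q*(1+q)/(1-q)^3 := by
    field_simp at heq ⊢
    nlinarith [heq]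
  rw [← hTval]; exact H

lemma hs3 {q : ℝ} (hq0 : 0 < q) (hq1 : q < 1) : HasSum (fun n : ℕ => (n:ℝ)^3*q^n) (q*(1+4*q+q^2)/(1-q)^4) := by
  have hp : (1:ℝ) - q ≠ 0 := by linarith
  have H := (hsummable hq0 hq1 3).hasSum
  set T := ∑' n : ℕ, (n:ℝ)^3 * q^n with hT
  have Hc : HasSum (fun n : ℕ => ((n:ℝ)+1)^3 * q^(n+1))
      (q*T + (3*q*(q*(1+q)/(1-q)^3) + (3*q*(q/(1-q)^2) + q*(1/(1-q))))) := by
    have := (H.mul_left q).add (((hs2 hq0 hq1).mul_left (3*q)).add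
      (((hs1 hq0 hq1).mul_left (3*q)).add ((hs0 hq0 hq1).mul_left q)))
    convert this using 1
    · rfl
    · funext n; ring
  have heq := (hshift hq0 hq1 3 (by norm_num)).unique Hc
  rw [← hT] at heq
  field_simp at heq
  have hTval : T = q*(1+4*q+q^2)/(1-q)^4 := by
    rw [eq_div_iff (pow_ne_zero 4 hp)]
    have h2 : T*(1-q)^4*(1-q)^3 = q*(1+4*q+q^2)*(1-q)^3 := by linear_combination (1-q)^3 * heq
    exact mul_right_cancel₀ (pow_ne_zero 3 hp) h2
  rw [← hTval]; exact H

lemma hs4 {q : ℝ} (hq0 : 0 < q) (hq1 : q < 1) : HasSum (fun n : ℕ => (n:ℝ)^4*q^n) (q*(1+11*q+11*q^2+q^3)/(1-q)^5) := by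
  have hp : (1:ℝ) - q ≠ 0 := by linarith
  have H := (hsummable hq0 hq1 4).hasSum
  set T := ∑' n : ℕ, (n:ℝ)^4 * q^n with hT
  have Hc : HasSum (fun n : ℕ => ((n:ℝ)+1)^4 * q^(n+1))
      (q*T + (4*q*(q*(1+4*q+q^2)/(1-q)^4) + (6*q*(q*(1+q)/(1-q)^3) +
        (4*q*(q/(1-q)^2) + q*(1/(1-q)))))) := by
    have := (H.mul_left q).add (((hs3 hq0 hq1).mul_left (4*q)).add
      (((hs2 hq0 hq1).mul_left (6*q)).add
      (((hs1 hq0 hq1).mul_left (4*q)).add ((hs0 hq0 hq1).mul_left q))))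
    convert this using 1
    · rfl
    · funext n; ring
  have heq := (hshift hq0 hq1 4 (by norm_num)).unique Hc
  rw [← hT] at heq
  field_simp at heq
  have hTval : T = q*(1+11*q+11*q^2+q^3)/(1-q)^5 := by
    rw [eq_div_iff (pow_ne_zero 5 hp)]
    have h2 : T*(1-q)^5*(1-q)^6 = q*(1+11*q+11*q^2+q^3)*(1-q)^6 := by linear_combination (1-q)^6 * heq
    exact mul_right_cancel₀ (pow_ne_zero 6 hp) h2
  rw [← hTval]; exact H

end

/-- For an `ℕ`-valued geometric random variable `ω` with
`P(ω = j) = e^{-jt} (1 - e^{-t})`, `t > 0`, the third absolute central moment satisfies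
`E[|ω - E[ω]|³] ≤ 3 e^{-t} / (1 - e^{-t})³`. -/
theorem geometric_third_absolute_central_moment
    {Ω : Type} [MeasurableSpace Ω] (P : Measure Ω) [IsProbabilityMeasure P]
    (ω : Ω → ℕ) (hmeas : Measurable ω) (t : ℝ) (ht : 0 < t)
    (hlaw : ∀ j : ℕ, P {a | ω a = j} =
      ENNReal.ofReal (Real.exp (-(j : ℝ) * t) * (1 - Real.exp (-t)))) :
    ∫ a, |(ω a : ℝ) - ∫ b, (ω b : ℝ) ∂P| ^ 3 ∂P ≤
      3 * Real.exp (-t) / (1 - Real.exp (-t)) ^ 3 := by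
  set q : ℝ := Real.exp (-t) with hqdef
  have hq0 : 0 < q := Real.exp_pos _
  have hq1 : q < 1 := by
    rw [hqdef, show (1:ℝ) = Real.exp 0 by simp]
    exact Real.exp_lt_exp.mpr (by linarith)
  have hp : (0:ℝ) < 1 - q := by linarith
  have hpne : (1:ℝ) - q ≠ 0 := hp.ne'
  set c : ℕ → ℝ := fun j => q ^ j * (1 - q) with hcdef
  have hc : ∀ j, 0 ≤ c j := fun j => mul_nonneg (pow_nonneg hq0.le j) hp.le
  have hlaw' : ∀ j : ℕ, P {a | ω a = j} = ENNReal.ofReal (c j) := by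
    intro j
    rw [hlaw j, hcdef]
    congr 2
    rw [show -(j:ℝ) * t = (j:ℝ) * (-t) by ring, Real.exp_nat_mul]
  -- mean
  have Hmean : HasSum (fun j : ℕ => c j * (j : ℝ)) (q / (1 - q)) := by
    have h := (hs1 hq0 hq1).mul_left (1 - q)
    convert h using 1
    · rfl
    · funext n; simp only [hcdef]; ring
    · field_simp
  have hmean : ∫ b, (ω b : ℝ) ∂P = q / (1 - q) :=
    (nat_integral_eq P ω hmeas c hc hlaw' (fun j => (j:ℝ)) (fun j => Nat.cast_nonneg j) Hmean).2
  rw [hmean]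
  set m : ℝ := q / (1 - q) with hmdef
  -- second central moment
  have HI2 : HasSum (fun j : ℕ => c j * ((j:ℝ) - m) ^ 2) (q / (1 - q) ^ 2) := by
    have h := (((hs2 hq0 hq1).mul_left (1 - q)).add
      (((hs1 hq0 hq1).mul_left (-(2*m)*(1-q))).add ((hs0 hq0 hq1).mul_left (m^2*(1-q)))))
    convert h using 1
    · rfl
    · funext n; simp only [hcdef]; ring
    · rw [hmdef]; field_simp; ring
  -- fourth central moment
  have HI4 : HasSum (fun j : ℕ => c j * ((j:ℝ) - m) ^ 4)
      (q * (1 + 7*q + q^2) / (1 - q) ^ 4) := by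
    have h := (((hs4 hq0 hq1).mul_left (1 - q)).add
      ((((hs3 hq0 hq1).mul_left (-(4*m)*(1-q)))).add
      ((((hs2 hq0 hq1).mul_left (6*m^2*(1-q)))).add
      ((((hs1 hq0 hq1).mul_left (-(4*m^3)*(1-q)))).add
      ((hs0 hq0 hq1).mul_left (m^4*(1-q)))))))
    convert h using 1
    · rfl
    · funext n; simp only [hcdef]; ring
    · rw [hmdef]; field_simp; ring
  -- dominating function
  set A : ℝ := 3 / (2 * (1 - q)) with hAdef
  set B : ℝ := (1 - q) / 6 with hBdef
  have hA : 0 < A := by rw [hAdef]; positivity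
  have hB : 0 < B := by rw [hBdef]; positivity
  have Hh : HasSum (fun j : ℕ => c j * (A * ((j:ℝ) - m) ^ 2 + B * ((j:ℝ) - m) ^ 4))
      (A * (q / (1 - q) ^ 2) + B * (q * (1 + 7*q + q^2) / (1 - q) ^ 4)) := by
    have h := (HI2.mul_left A).add (HI4.mul_left B)
    convert h using 1
    · rfl
    · funext n; ring
  have hkey := nat_integral_eq P ω hmeas c hc hlaw'
    (fun j : ℕ => A * ((j:ℝ) - m) ^ 2 + B * ((j:ℝ) - m) ^ 4)
    (fun j => by positivity) Hh
  have hint : Integrable (fun a => A * ((ω a : ℝ) - m) ^ 2 + B * ((ω a : ℝ) - m) ^ 4) P := hkey.1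
  have hval : ∫ a, (A * ((ω a : ℝ) - m) ^ 2 + B * ((ω a : ℝ) - m) ^ 4) ∂P
      = A * (q / (1 - q) ^ 2) + B * (q * (1 + 7*q + q^2) / (1 - q) ^ 4) := hkey.2
  -- pointwise bound
  have hpt : ∀ a : Ω, |(ω a : ℝ) - m| ^ 3 ≤ A * ((ω a : ℝ) - m) ^ 2 + B * ((ω a : ℝ) - m) ^ 4 := by
    intro a
    set u : ℝ := |(ω a : ℝ) - m| with hu
    have hu0 : 0 ≤ u := abs_nonneg _
    have h2 : ((ω a : ℝ) - m) ^ 2 = u ^ 2 := (sq_abs _).symm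
    have h4 : ((ω a : ℝ) - m) ^ 4 = u ^ 4 := by
      rw [hu, ← abs_pow, abs_of_nonneg (by positivity)]
    rw [h2, h4]
    have hmain : 6 * (1 - q) * u ^ 3 ≤ 9 * u ^ 2 + (1 - q)^2 * u ^ 4 := by
      nlinarith [sq_nonneg ((1 - q) * u ^ 2 - 3 * u)]
    have heq1 : u ^ 3 = (6 * (1 - q) * u ^ 3) / (6 * (1 - q)) := by field_simp
    have heq2 : (9 * u ^ 2 + (1 - q)^2 * u ^ 4) / (6 * (1 - q)) = A * u ^ 2 + B * u ^ 4 := by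
      rw [hAdef, hBdef]; field_simp; ring
    rw [heq1, ← heq2]
    gcongr
  -- conclude
  calc ∫ a, |(ω a : ℝ) - m| ^ 3 ∂P
      ≤ ∫ a, (A * ((ω a : ℝ) - m) ^ 2 + B * ((ω a : ℝ) - m) ^ 4) ∂P := by
        refine integral_mono_of_nonneg (Filter.Eventually.of_forall fun a => by positivity) hint
          (Filter.Eventually.of_forall hpt)
  _ = A * (q / (1 - q) ^ 2) + B * (q * (1 + 7*q + q^2) / (1 - q) ^ 4) := hval
  _ ≤ 3 * q / (1 - q) ^ 3 := by
      rw [hAdef, hBdef, show 3 / (2 * (1 - q)) * (q / (1 - q) ^ 2) +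
          (1 - q) / 6 * (q * (1 + 7*q + q^2) / (1 - q) ^ 4)
          = (9 * q + q * (1 + 7*q + q^2)) / (6 * (1 - q) ^ 3) from by field_simp; ring,
        div_le_div_iff₀ (by positivity) (by positivity)]
      have h8 : (0:ℝ) ≤ 8 - 7*q - q^2 := by nlinarith
      nlinarith [mul_nonneg (mul_nonneg hq0.le h8) (pow_pos hp 3).le]

end
end

section
/- As n → ∞, the weighted sum over primitive lattice points of the subcone satisfies Σ_{x ∈ P_d ∩ C_1} ‖x‖³ · 3·e^{-β_n a·x}/(1 − e^{-β_n a·x})³ = O(n^{(d+3)/(d+1)}). -/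
open MeasureTheory ProbabilityTheory Real Filter Asymptotics Topology Matrix

noncomputable section

/-- Real values of the Riemann zeta function at integer arguments. -/
def zetaR (s : ℕ) : ℝ := ∑' k : ℕ+, (1 : ℝ) / (k : ℝ) ^ s

/-- A vector of `ℤ^d` is primitive if it is nonzero and the gcd of its coordinates is 1. -/
def IsPrimitiveVec {d : ℕ} (v : Fin d → ℤ) : Prop :=
  v ≠ 0 ∧ Finset.univ.gcd v = 1

/-- The set of primitive vectors of `ℤ^d`, viewed inside `ℝ^d`. -/
def primSet (d : ℕ) : Set (EuclideanSpace ℝ (Fin d)) :=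
  {y | ∃ v : Fin d → ℤ, IsPrimitiveVec v ∧ ∀ i, y i = (v i : ℝ)}

/-- Dot product on `ℝ^d`. -/
def dotR {d : ℕ} (a x : EuclideanSpace ℝ (Fin d)) : ℝ := ∑ i, a i * x i

/-- `β_n = (ζ(d+1) / (ζ(d) n))^{1/(d+1)}`. -/
def betaSeq (d : ℕ) (n : ℕ) : ℝ :=
  (zetaR (d + 1) / (zetaR d * n)) ^ ((1 : ℝ) / (d + 1))

/-- A `d`-dimensional closed convex pointed (salient) cone containing `0`. -/
structure IsGoodCone {d : ℕ} (C : Set (EuclideanSpace ℝ (Fin d))) : Prop where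
  closed : IsClosed C
  convex : Convex ℝ C
  smul_mem : ∀ (c : ℝ), 0 ≤ c → ∀ x ∈ C, c • x ∈ C
  salient : C ∩ (-C) ⊆ {0}
  fullDim : (interior C).Nonempty
  zero_mem : (0 : EuclideanSpace ℝ (Fin d)) ∈ C

/-- `μ^n(C_1) = Σ_{x ∈ P_d ∩ C_1} x e^{-β_n a·x} / (1 - e^{-β_n a·x})`. -/
def muN {d : ℕ} (a : EuclideanSpace ℝ (Fin d)) (S : Set (EuclideanSpace ℝ (Fin d))) (n : ℕ) :
    EuclideanSpace ℝ (Fin d) :=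
  ∑' x : ↥(primSet d ∩ S),
    (Real.exp (-(betaSeq d n * dotR a x)) / (1 - Real.exp (-(betaSeq d n * dotR a x)))) •
      (x : EuclideanSpace ℝ (Fin d))

/-- `μ(C_1) = (d+1)! ∫_{C(a ≤ 1) ∩ C_1} x dx`. -/
def muLim {d : ℕ} (a : EuclideanSpace ℝ (Fin d)) (C S : Set (EuclideanSpace ℝ (Fin d))) :
    EuclideanSpace ℝ (Fin d) :=
  (Nat.factorial (d + 1) : ℝ) • ∫ x in ({x ∈ C | dotR a x ≤ 1} ∩ S), x

/-- `Γ^n(C_1) = Σ_{x ∈ P_d ∩ C_1} x xᵀ e^{-β_n a·x} / (1 - e^{-β_n a·x})²`. -/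
def GammaN {d : ℕ} (a : EuclideanSpace ℝ (Fin d)) (S : Set (EuclideanSpace ℝ (Fin d))) (n : ℕ) :
    Matrix (Fin d) (Fin d) ℝ :=
  Matrix.of fun i j => ∑' x : ↥(primSet d ∩ S),
    (x : EuclideanSpace ℝ (Fin d)) i * (x : EuclideanSpace ℝ (Fin d)) j *
      (Real.exp (-(betaSeq d n * dotR a x)) / (1 - Real.exp (-(betaSeq d n * dotR a x))) ^ 2)

/-- `Γ(C_1) = (ζ(d)/ζ(d+1))^{1/(d+1)} (d+1)! ∫_{C(a ≤ 1) ∩ C_1} x xᵀ dx`. -/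
def GammaLim {d : ℕ} (a : EuclideanSpace ℝ (Fin d)) (C S : Set (EuclideanSpace ℝ (Fin d))) :
    Matrix (Fin d) (Fin d) ℝ :=
  Matrix.of fun i j =>
    (zetaR d / zetaR (d + 1)) ^ ((1 : ℝ) / (d + 1)) * (Nat.factorial (d + 1) : ℝ) *
      ∫ x in ({x ∈ C | dotR a x ≤ 1} ∩ S), x i * x j

/-- Reinterpret a plain vector of `Fin d → ℝ` as a point of Euclidean space. -/
def toE {d : ℕ} (v : Fin d → ℝ) : EuclideanSpace ℝ (Fin d) :=
  (EuclideanSpace.equiv (Fin d) ℝ).symm v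

/-- Apply a matrix to a vector of Euclidean space. -/
def mulVecE {d : ℕ} (M : Matrix (Fin d) (Fin d) ℝ) (v : EuclideanSpace ℝ (Fin d)) :
    EuclideanSpace ℝ (Fin d) :=
  toE (M.mulVec fun i => v i)

/-- The standard Gaussian measure on `ℝ^d`. -/
def stdGaussian (d : ℕ) : Measure (EuclideanSpace ℝ (Fin d)) :=
  volume.withDensity fun x =>
    ENNReal.ofReal ((2 * π) ^ (-(d : ℝ) / 2) * Real.exp (-‖x‖ ^ 2 / 2))

/-- `X^n(C_1) = Σ_{x ∈ P_d ∩ C_1} ω(x) x`, where the multiplicities are indexed by the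
primitive vectors of the ambient cone `C`. -/
def Xpart {d : ℕ} {Ω : Type} (C C1 : Set (EuclideanSpace ℝ (Fin d)))
    (ωm : ↥(primSet d ∩ C) → Ω → ℕ) (ω' : Ω) : EuclideanSpace ℝ (Fin d) :=
  ∑' x : ↥(primSet d ∩ C),
    Set.indicator C1 (fun _ => (ωm x ω' : ℝ) • (x : EuclideanSpace ℝ (Fin d)))
      (x : EuclideanSpace ℝ (Fin d))


section AuxThirdMoment

lemma aux_zetaR_pos {s : ℕ} (hs : 2 ≤ s) : 0 < zetaR s := by
  have hsum : Summable (fun n : ℕ => 1 / (n : ℝ) ^ s) := Real.summable_one_div_nat_pow.2 hs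
  have hsum' : Summable (fun k : ℕ+ => (1 : ℝ) / (k : ℝ) ^ s) := by
    have h := hsum.comp_injective PNat.coe_injective
    refine h.congr fun k => ?_
    simp [Function.comp]
  refine Summable.tsum_pos hsum' (fun k => by positivity) 1 (by norm_num)

lemma aux_key (t : ℝ) (ht : 0 < t) :
    t * Real.exp (-(t / 6)) ≤ 4 * (1 - Real.exp (-t)) := by
  have he1 : (2.7182818283 : ℝ) < Real.exp 1 := Real.exp_one_gt_d9
  have he2 : Real.exp 1 < 2.7182818286 := Real.exp_one_lt_d9
  have hsmax : ∀ s : ℝ, 0 < s → s * Real.exp (-s) ≤ (Real.exp 1)⁻¹ := by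
    intro s hs0
    have h := Real.add_one_le_exp (s - 1)
    rw [Real.exp_sub] at h
    have h' : s ≤ Real.exp s / Real.exp 1 := by linarith
    have h2 : s * Real.exp 1 ≤ Real.exp s := (le_div_iff₀ (Real.exp_pos 1)).1 h'
    rw [Real.exp_neg, ← div_eq_mul_inv, ← one_div]
    rw [div_le_div_iff₀ (Real.exp_pos s) (Real.exp_pos 1)]
    linarith [h2]
  rcases le_or_gt t 1 with h | h
  · have h1 : t * Real.exp (-t) ≤ 1 - Real.exp (-t) := by
      have hx := Real.add_one_le_exp t
      have hp : 0 < Real.exp (-t) := Real.exp_pos _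
      have hmul : (t + 1) * Real.exp (-t) ≤ Real.exp t * Real.exp (-t) :=
        mul_le_mul_of_nonneg_right hx hp.le
      rw [← Real.exp_add] at hmul
      simp only [add_neg_cancel, Real.exp_zero] at hmul
      nlinarith
    have h2 : Real.exp (-1) ≤ Real.exp (-t) := Real.exp_le_exp.2 (by linarith)
    have h3 : (1 : ℝ) / 4 ≤ Real.exp (-1) := by
      rw [Real.exp_neg, ← one_div]
      apply one_div_le_one_div_of_le (Real.exp_pos 1)
      linarith
    have h4 : Real.exp (-(t / 6)) ≤ 1 := Real.exp_le_one_iff.2 (by linarith)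
    nlinarith [Real.exp_pos (-t), Real.exp_pos (-(t/6))]
  · have h1 : t * Real.exp (-(t / 6)) ≤ 6 * (Real.exp 1)⁻¹ := by
      have := hsmax (t / 6) (by linarith)
      nlinarith
    have h2 : Real.exp (-t) ≤ Real.exp (-1) := Real.exp_le_exp.2 (by linarith)
    have h3 : Real.exp (-1) = (Real.exp 1)⁻¹ := Real.exp_neg 1
    have h4 : (Real.exp 1)⁻¹ < (2.5 : ℝ)⁻¹ := by
      apply inv_strictAnti₀ (by norm_num)
      linarith
    nlinarith

lemma aux_bound (t : ℝ) (ht : 0 < t) :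
    Real.exp (-t) / (1 - Real.exp (-t)) ^ 3 ≤ 64 * Real.exp (-(t / 2)) / t ^ 3 := by
  have hE : 0 < 1 - Real.exp (-t) := by
    have : Real.exp (-t) < 1 := Real.exp_lt_one_iff.2 (by linarith)
    linarith
  have hkey := aux_key t ht
  have hcube : (t * Real.exp (-(t / 6))) ^ 3 ≤ (4 * (1 - Real.exp (-t))) ^ 3 :=
    pow_le_pow_left₀ (by positivity) hkey 3
  have hid : (t * Real.exp (-(t / 6))) ^ 3 = t ^ 3 * Real.exp (-(t / 2)) := by
    rw [mul_pow]
    congr 1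
    rw [← Real.exp_nat_mul]
    congr 1
    push_cast
    ring
  rw [div_le_div_iff₀ (by positivity) (by positivity)]
  have h1 : t ^ 3 * Real.exp (-(t / 2)) ≤ 64 * (1 - Real.exp (-t)) ^ 3 := by
    calc t ^ 3 * Real.exp (-(t / 2)) = (t * Real.exp (-(t / 6))) ^ 3 := hid.symm
      _ ≤ (4 * (1 - Real.exp (-t))) ^ 3 := hcube
      _ = 64 * (1 - Real.exp (-t)) ^ 3 := by ring
  have h2 : Real.exp (-t) = Real.exp (-(t / 2)) * Real.exp (-(t / 2)) := by
    rw [← Real.exp_add]; congr 1; ring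
  calc Real.exp (-t) * t ^ 3 = (t ^ 3 * Real.exp (-(t / 2))) * Real.exp (-(t / 2)) := by
        rw [h2]; ring
    _ ≤ (64 * (1 - Real.exp (-t)) ^ 3) * Real.exp (-(t / 2)) :=
        mul_le_mul_of_nonneg_right h1 (Real.exp_pos _).le
    _ = 64 * Real.exp (-(t / 2)) * (1 - Real.exp (-t)) ^ 3 := by ring

lemma aux_hasSum_int {r : ℝ} (h0 : 0 ≤ r) (h1 : r < 1) :
    HasSum (fun k : ℤ => r ^ k.natAbs) ((1 - r)⁻¹ + r * (1 - r)⁻¹) := by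
  have hg := hasSum_geometric_of_lt_one h0 h1
  refine HasSum.of_nat_of_neg_add_one ?_ ?_
  · have heq : (fun n : ℕ => r ^ ((n : ℤ)).natAbs) = fun n : ℕ => r ^ n := by
      funext n; simp
    show HasSum (fun n : ℕ => r ^ ((n : ℤ)).natAbs) (1 - r)⁻¹
    rw [heq]; exact hg
  · have heq : (fun n : ℕ => r ^ ((-((n : ℤ) + 1))).natAbs) = fun n : ℕ => r * r ^ n := by
      funext n
      have hn : ((-((n : ℤ) + 1))).natAbs = n + 1 := by omega
      rw [hn, pow_succ]; ring
    show HasSum (fun n : ℕ => r ^ ((-((n : ℤ) + 1))).natAbs) (r * (1 - r)⁻¹)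
    rw [heq]; exact hg.mul_left r

lemma aux_pi (m : ℕ) {h : ℤ → ℝ} (h0 : ∀ k, 0 ≤ h k) (hs : Summable h) :
    Summable (fun v : Fin m → ℤ => ∏ i, h (v i)) ∧
      (∑' v : Fin m → ℤ, ∏ i, h (v i)) = (∑' k, h k) ^ m := by
  induction m with
  | zero =>
      constructor
      · exact Summable.of_finite
      · rw [tsum_eq_single (default : Fin 0 → ℤ)
          (fun b hb => absurd (Subsingleton.elim b default) hb)]
        simp
  | succ m ih =>
      obtain ⟨ihs, iht⟩ := ih
      have hP0 : ∀ w : Fin m → ℤ, 0 ≤ ∏ i, h (w i) :=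
        fun w => Finset.prod_nonneg fun i _ => h0 _
      have hsum2 : Summable (fun p : ℤ × (Fin m → ℤ) => h p.1 * ∏ i, h (p.2 i)) :=
        Summable.mul_of_nonneg (f := h) (g := fun w : Fin m → ℤ => ∏ i, h (w i))
          hs ihs (fun k => h0 k) (fun w => hP0 w)
      have he : ∀ p : ℤ × (Fin m → ℤ),
          (∏ i, h ((Fin.consEquiv (fun _ : Fin (m+1) => ℤ)) p i)) = h p.1 * ∏ i, h (p.2 i) := by
        rintro ⟨k, w⟩
        rw [Fin.prod_univ_succ]
        simp [Fin.consEquiv]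
      have hsumF : Summable (fun v : Fin (m + 1) → ℤ => ∏ i, h (v i)) := by
        rw [← (Fin.consEquiv (fun _ : Fin (m+1) => ℤ)).summable_iff]
        exact hsum2.congr fun p => (he p).symm
      refine ⟨hsumF, ?_⟩
      calc (∑' v : Fin (m + 1) → ℤ, ∏ i, h (v i))
          = ∑' p : ℤ × (Fin m → ℤ), h p.1 * ∏ i, h (p.2 i) := by
            rw [← (Fin.consEquiv (fun _ : Fin (m+1) => ℤ)).tsum_eq (fun v => ∏ i, h (v i))]
            exact tsum_congr he
        _ = ∑' k : ℤ, ∑' w : Fin m → ℤ, h k * ∏ i, h (w i) := Summable.tsum_prod' hsum2 (fun b => ihs.mul_left (h b))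
        _ = (∑' k, h k) * ∑' w : Fin m → ℤ, ∏ i, h (w i) := by
            simp_rw [tsum_mul_left]
            exact tsum_mul_right
        _ = (∑' k, h k) ^ (m + 1) := by rw [iht]; ring

lemma aux_coord {d : ℕ} (x : EuclideanSpace ℝ (Fin d)) (j : Fin d) : |x j| ≤ ‖x‖ := by
  rw [EuclideanSpace.norm_eq]
  calc |x j| = Real.sqrt (‖x j‖ ^ 2) := by
        rw [Real.sqrt_sq_eq_abs, Real.norm_eq_abs, abs_abs]
    _ ≤ Real.sqrt (∑ i, ‖x i‖ ^ 2) := Real.sqrt_le_sqrt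
        (Finset.single_le_sum (f := fun i => ‖x i‖ ^ 2)
          (fun i _ => sq_nonneg _) (Finset.mem_univ j))

lemma aux_coercive {d : ℕ} {C : Set (EuclideanSpace ℝ (Fin d))} (hC : IsGoodCone C)
    {a : EuclideanSpace ℝ (Fin d)} (ha : ∀ x ∈ C, x ≠ 0 → 0 < dotR a x) :
    ∃ c : ℝ, 0 < c ∧ ∀ x ∈ C, c * ‖x‖ ≤ dotR a x := by
  have hcont : Continuous fun x : EuclideanSpace ℝ (Fin d) => dotR a x := by
    unfold dotR
    exact continuous_finset_sum _ fun i _ =>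
      continuous_const.mul (EuclideanSpace.proj (𝕜 := ℝ) i).continuous
  have hmemK : ∀ x : EuclideanSpace ℝ (Fin d), x ∈ C → x ≠ 0 →
      (‖x‖⁻¹ • x) ∈ C ∩ Metric.sphere (0 : EuclideanSpace ℝ (Fin d)) 1 := by
    intro x hx hx0
    have hxn : 0 < ‖x‖ := norm_pos_iff.2 hx0
    constructor
    · exact hC.smul_mem _ (by positivity) x hx
    · rw [mem_sphere_zero_iff_norm, norm_smul, norm_inv, norm_norm]
      exact inv_mul_cancel₀ hxn.ne'
  by_cases hne : (C ∩ Metric.sphere (0 : EuclideanSpace ℝ (Fin d)) 1).Nonempty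
  · have hKc : IsCompact (C ∩ Metric.sphere (0 : EuclideanSpace ℝ (Fin d)) 1) :=
      (isCompact_sphere 0 1).inter_left hC.closed
    obtain ⟨x₀, hx₀, hmin⟩ := hKc.exists_isMinOn hne hcont.continuousOn
    have hx₀n : ‖x₀‖ = 1 := mem_sphere_zero_iff_norm.1 hx₀.2
    have hx₀0 : x₀ ≠ 0 := by
      intro h; rw [h, norm_zero] at hx₀n; norm_num at hx₀n
    refine ⟨dotR a x₀, ha x₀ hx₀.1 hx₀0, ?_⟩
    intro x hx
    rcases eq_or_ne x 0 with rfl | hx0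
    · simp [dotR]
    · have hxn : 0 < ‖x‖ := norm_pos_iff.2 hx0
      have hy := hmemK x hx hx0
      have hlin : dotR a (‖x‖⁻¹ • x) = ‖x‖⁻¹ * dotR a x := by
        unfold dotR
        rw [Finset.mul_sum]
        refine Finset.sum_congr rfl fun i _ => ?_
        have hcoord : (‖x‖⁻¹ • x) i = ‖x‖⁻¹ * x i := rfl
        rw [hcoord]; ring
      have hle : dotR a x₀ ≤ ‖x‖⁻¹ * dotR a x := by
        have h := hmin hy
        simpa [hlin] using h
      have h2 : ‖x‖ * (‖x‖⁻¹ * dotR a x) = dotR a x := by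
        field_simp
      have h3 := mul_le_mul_of_nonneg_left hle hxn.le
      rw [h2] at h3
      linarith
  · refine ⟨1, one_pos, ?_⟩
    intro x hx
    rcases eq_or_ne x 0 with rfl | hx0
    · simp [dotR]
    · exact absurd ⟨_, hmemK x hx hx0⟩ hne

end AuxThirdMoment

/-- As `n → ∞`,
`Σ_{x ∈ P_d ∩ C_1} ‖x‖³ · 3 e^{-β_n a·x} / (1 - e^{-β_n a·x})³ = O(n^{(d+3)/(d+1)})`. -/
theorem third_moment_sum_bound {d : ℕ} (hd : 2 ≤ d)
    (C C1 : Set (EuclideanSpace ℝ (Fin d)))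
    (hC : IsGoodCone C) (hC1 : IsGoodCone C1) (hC1sub : C1 ⊆ C)
    (a : EuclideanSpace ℝ (Fin d)) (ha : ∀ x ∈ C, x ≠ 0 → 0 < dotR a x) :
    (fun n : ℕ => ∑' x : ↥(primSet d ∩ C1),
        ‖(x : EuclideanSpace ℝ (Fin d))‖ ^ 3 *
          (3 * Real.exp (-(betaSeq d n * dotR a x)) /
            (1 - Real.exp (-(betaSeq d n * dotR a x))) ^ 3))
      =O[atTop] (fun n : ℕ => (n : ℝ) ^ (((d : ℝ) + 3) / ((d : ℝ) + 1))) := by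
  classical
  have hz0 : 0 < zetaR d := aux_zetaR_pos hd
  have hz1 : 0 < zetaR (d + 1) := aux_zetaR_pos (by omega)
  have hdpos : (0 : ℝ) < (d : ℝ) := by
    have : 0 < d := by omega
    exact_mod_cast this
  obtain ⟨c, hc0, hc⟩ := aux_coercive hC ha
  have hβto : Tendsto (betaSeq d) atTop (𝓝 0) := by
    have h1 : Tendsto (fun n : ℕ => zetaR (d + 1) / (zetaR d * (n : ℝ))) atTop (𝓝 0) :=
      Tendsto.div_atTop tendsto_const_nhds
        (Tendsto.const_mul_atTop hz0 tendsto_natCast_atTop_atTop)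
    have h2 : ContinuousAt (fun x : ℝ => x ^ ((1 : ℝ) / ((d : ℝ) + 1))) 0 :=
      Real.continuousAt_rpow_const 0 _ (Or.inr (by positivity))
    have h3 := h2.tendsto.comp h1
    rw [Real.zero_rpow (ne_of_gt (by positivity : (0:ℝ) < (1:ℝ)/((d:ℝ)+1)))] at h3
    exact h3
  have hsmall : ∀ᶠ n : ℕ in atTop, betaSeq d n * c / (2 * (d : ℝ)) ≤ 1 := by
    have h1 : Tendsto (fun n : ℕ => betaSeq d n * c / (2 * (d : ℝ))) atTop (𝓝 0) := by
      have h := (hβto.mul_const c).div_const (2 * (d : ℝ))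
      simpa using h
    exact h1.eventually (eventually_le_nhds one_pos)
  rw [isBigO_iff]
  refine ⟨(192 * (1 / c) ^ 3 * (12 * (d : ℝ) / c) ^ d) *
    (zetaR d / zetaR (d + 1)) ^ (((d:ℝ)+3)/((d:ℝ)+1)), ?_⟩
  filter_upwards [eventually_ge_atTop 1, hsmall] with n hn hun
  have hnpos : (0 : ℝ) < (n : ℝ) := by
    have : 0 < n := hn
    exact_mod_cast this
  have hβp : 0 < betaSeq d n := by
    apply Real.rpow_pos_of_pos
    exact div_pos hz1 (mul_pos hz0 hnpos)
  set β := betaSeq d n with hβdef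
  set u : ℝ := β * c / (2 * (d : ℝ)) with hudef
  have hup : 0 < u := by positivity
  have hu1 : u ≤ 1 := hun
  set r : ℝ := Real.exp (-u) with hrdef
  have hr0 : (0:ℝ) ≤ r := (Real.exp_pos _).le
  have hr1 : r < 1 := Real.exp_lt_one_iff.2 (by linarith)
  have hint := aux_hasSum_int hr0 hr1
  have hintS : Summable (fun k : ℤ => r ^ k.natAbs) := hint.summable
  have hintle : (∑' k : ℤ, r ^ k.natAbs) ≤ 6 / u := by
    rw [hint.tsum_eq]
    have h1r : 0 < 1 - r := by linarith
    have hrle : r ≤ 1 / (u + 1) := by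
      rw [hrdef, Real.exp_neg, ← one_div]
      apply one_div_le_one_div_of_le (by linarith)
      linarith [Real.add_one_le_exp u]
    have hbound : u / 2 ≤ 1 - r := by
      have h2 : 1 - 1 / (u + 1) = u / (u + 1) := by field_simp; ring
      have h3 : u / 2 ≤ u / (u + 1) := by
        rw [div_le_div_iff₀ (by norm_num) (by linarith)]
        nlinarith
      linarith
    have hinv : (1 - r)⁻¹ ≤ 2 / u := by
      have h4 := one_div_le_one_div_of_le (by positivity : (0:ℝ) < u / 2) hbound
      rw [one_div_div] at h4
      rw [one_div] at h4
      exact h4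
    have hr1' : r * (1 - r)⁻¹ ≤ (1 - r)⁻¹ := by
      nlinarith [inv_nonneg.2 h1r.le]
    have h6 : (4:ℝ) / u ≤ 6 / u := by
      rw [div_le_div_iff₀ hup hup]
      nlinarith
    have h7 : (2:ℝ) * (2 / u) = 4 / u := by ring
    linarith
  obtain ⟨hpiS, hpiT⟩ := aux_pi d (fun k => pow_nonneg hr0 _) hintS
  have htsumInt_nonneg : 0 ≤ ∑' k : ℤ, r ^ k.natAbs :=
    tsum_nonneg fun k => pow_nonneg hr0 _
  have hpile : (∑' v : Fin d → ℤ, ∏ j, r ^ (v j).natAbs) ≤ (6 / u) ^ d := by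
    rw [hpiT]
    exact pow_le_pow_left₀ htsumInt_nonneg hintle d
  set M : ℝ := 192 / (β * c) ^ 3 with hMdef
  have hM0 : 0 < M := by positivity
  set G : (Fin d → ℤ) → ℝ := fun v => M * ∏ j, r ^ (v j).natAbs with hGdef
  have hGS : Summable G := hpiS.mul_left M
  have hG0 : ∀ v, 0 ≤ G v := fun v =>
    mul_nonneg hM0.le (Finset.prod_nonneg fun j _ => pow_nonneg hr0 _)
  have hGle : (∑' v, G v) ≤ M * (6 / u) ^ d := by
    rw [hGdef, tsum_mul_left]
    exact mul_le_mul_of_nonneg_left hpile hM0.le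
  have hmem : ∀ x : ↥(primSet d ∩ C1),
      ∃ v : Fin d → ℤ, IsPrimitiveVec v ∧
        ∀ j, (x : EuclideanSpace ℝ (Fin d)) j = (v j : ℝ) :=
    fun x => x.2.1
  set i : ↥(primSet d ∩ C1) → (Fin d → ℤ) := fun x => (hmem x).choose with hidef
  have hspec : ∀ x : ↥(primSet d ∩ C1), IsPrimitiveVec (i x) ∧
      ∀ j, (x : EuclideanSpace ℝ (Fin d)) j = ((i x) j : ℝ) :=
    fun x => (hmem x).choose_spec
  have hinj : Function.Injective i := by
    intro x y hxy
    apply Subtype.ext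
    ext j
    rw [(hspec x).2 j, (hspec y).2 j, hxy]
  have hterm : ∀ x : ↥(primSet d ∩ C1),
      0 ≤ ‖(x : EuclideanSpace ℝ (Fin d))‖ ^ 3 *
          (3 * Real.exp (-(β * dotR a x)) / (1 - Real.exp (-(β * dotR a x))) ^ 3) ∧
        ‖(x : EuclideanSpace ℝ (Fin d))‖ ^ 3 *
          (3 * Real.exp (-(β * dotR a x)) / (1 - Real.exp (-(β * dotR a x))) ^ 3) ≤ G (i x) := by
    intro x
    have hxC : (x : EuclideanSpace ℝ (Fin d)) ∈ C := hC1sub x.2.2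
    have hx0 : (x : EuclideanSpace ℝ (Fin d)) ≠ 0 := by
      intro h
      apply (hspec x).1.1
      funext j
      have hj := (hspec x).2 j
      rw [h] at hj
      have hj0 : ((i x) j : ℝ) = 0 := by simpa using hj.symm
      simp only [Pi.zero_apply]
      exact_mod_cast hj0
    have hxn : 0 < ‖(x : EuclideanSpace ℝ (Fin d))‖ := norm_pos_iff.2 hx0
    have hdot : 0 < dotR a x := ha _ hxC hx0
    have ht : 0 < β * dotR a x := mul_pos hβp hdot
    have hE : 0 < 1 - Real.exp (-(β * dotR a x)) := by
      have hlt : Real.exp (-(β * dotR a x)) < 1 := Real.exp_lt_one_iff.2 (by linarith)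
      linarith
    constructor
    · apply mul_nonneg (by positivity)
      apply div_nonneg (by positivity) (by positivity)
    · have hb := aux_bound (β * dotR a x) ht
      have hstep1 : 3 * Real.exp (-(β * dotR a x)) / (1 - Real.exp (-(β * dotR a x))) ^ 3
          ≤ 192 * (Real.exp (-(β * dotR a x / 2)) / (β * dotR a x) ^ 3) := by
        calc 3 * Real.exp (-(β * dotR a x)) / (1 - Real.exp (-(β * dotR a x))) ^ 3
            = 3 * (Real.exp (-(β * dotR a x)) / (1 - Real.exp (-(β * dotR a x))) ^ 3) := by
              ring
          _ ≤ 3 * (64 * Real.exp (-(β * dotR a x / 2)) / (β * dotR a x) ^ 3) := by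
              apply mul_le_mul_of_nonneg_left hb (by norm_num)
          _ = 192 * (Real.exp (-(β * dotR a x / 2)) / (β * dotR a x) ^ 3) := by ring
      have hsle : β * c * ‖(x : EuclideanSpace ℝ (Fin d))‖ ≤ β * dotR a x := by
        have h := hc _ hxC
        calc β * c * ‖(x : EuclideanSpace ℝ (Fin d))‖
            = β * (c * ‖(x : EuclideanSpace ℝ (Fin d))‖) := by ring
          _ ≤ β * dotR a x := mul_le_mul_of_nonneg_left h hβp.le
      have hspos : 0 < β * c * ‖(x : EuclideanSpace ℝ (Fin d))‖ := by positivity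
      have hstep2 : Real.exp (-(β * dotR a x / 2)) / (β * dotR a x) ^ 3
          ≤ Real.exp (-(β * c * ‖(x : EuclideanSpace ℝ (Fin d))‖ / 2)) /
            (β * c * ‖(x : EuclideanSpace ℝ (Fin d))‖) ^ 3 :=
        div_le_div₀ (Real.exp_pos _).le
          (Real.exp_le_exp.2 (by linarith)) (by positivity)
          (pow_le_pow_left₀ hspos.le hsle 3)
      have halg : ‖(x : EuclideanSpace ℝ (Fin d))‖ ^ 3 *
          (192 * (Real.exp (-(β * c * ‖(x : EuclideanSpace ℝ (Fin d))‖ / 2)) /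
            (β * c * ‖(x : EuclideanSpace ℝ (Fin d))‖) ^ 3))
          = M * Real.exp (-(β * c * ‖(x : EuclideanSpace ℝ (Fin d))‖ / 2)) := by
        rw [hMdef]
        field_simp
      have hsum_abs : (∑ j, |(x : EuclideanSpace ℝ (Fin d)) j|)
          ≤ (d : ℝ) * ‖(x : EuclideanSpace ℝ (Fin d))‖ := by
        calc (∑ j, |(x : EuclideanSpace ℝ (Fin d)) j|)
            ≤ ∑ _j : Fin d, ‖(x : EuclideanSpace ℝ (Fin d))‖ :=
              Finset.sum_le_sum fun j _ => aux_coord _ j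
          _ = (d : ℝ) * ‖(x : EuclideanSpace ℝ (Fin d))‖ := by
              rw [Finset.sum_const, Finset.card_univ, Fintype.card_fin, nsmul_eq_mul]
      have hSabs : (∑ j, (((i x) j).natAbs : ℝ))
          = ∑ j, |(x : EuclideanSpace ℝ (Fin d)) j| := by
        refine Finset.sum_congr rfl fun j _ => ?_
        rw [(hspec x).2 j, Nat.cast_natAbs, Int.cast_abs]
      have hexp : u * (∑ j, (((i x) j).natAbs : ℝ))
          ≤ β * c * ‖(x : EuclideanSpace ℝ (Fin d))‖ / 2 := by
        rw [hSabs, hudef]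
        have h := mul_le_mul_of_nonneg_left hsum_abs
          (by positivity : (0:ℝ) ≤ β * c / (2 * (d : ℝ)))
        calc β * c / (2 * (d : ℝ)) * (∑ j, |(x : EuclideanSpace ℝ (Fin d)) j|)
            ≤ β * c / (2 * (d : ℝ)) * ((d : ℝ) * ‖(x : EuclideanSpace ℝ (Fin d))‖) := h
          _ = β * c * ‖(x : EuclideanSpace ℝ (Fin d))‖ / 2 := by
              field_simp
      have hprod : Real.exp (-(β * c * ‖(x : EuclideanSpace ℝ (Fin d))‖ / 2))
          ≤ ∏ j, r ^ (((i x) j).natAbs) := by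
        have h1 : Real.exp (-(β * c * ‖(x : EuclideanSpace ℝ (Fin d))‖ / 2))
            ≤ Real.exp (-(u * ∑ j, (((i x) j).natAbs : ℝ))) :=
          Real.exp_le_exp.2 (by linarith)
        refine h1.trans_eq ?_
        calc Real.exp (-(u * ∑ j, (((i x) j).natAbs : ℝ)))
            = Real.exp (∑ j, ((((i x) j).natAbs : ℝ) * (-u))) := by
              congr 1
              rw [← Finset.sum_mul]
              ring
          _ = ∏ j, Real.exp ((((i x) j).natAbs : ℝ) * (-u)) := Real.exp_sum _ _
          _ = ∏ j, r ^ (((i x) j).natAbs) := by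
              refine Finset.prod_congr rfl fun j _ => ?_
              rw [Real.exp_nat_mul]
      calc ‖(x : EuclideanSpace ℝ (Fin d))‖ ^ 3 *
            (3 * Real.exp (-(β * dotR a x)) / (1 - Real.exp (-(β * dotR a x))) ^ 3)
          ≤ ‖(x : EuclideanSpace ℝ (Fin d))‖ ^ 3 *
            (192 * (Real.exp (-(β * dotR a x / 2)) / (β * dotR a x) ^ 3)) :=
            mul_le_mul_of_nonneg_left hstep1 (by positivity)
        _ ≤ ‖(x : EuclideanSpace ℝ (Fin d))‖ ^ 3 *
            (192 * (Real.exp (-(β * c * ‖(x : EuclideanSpace ℝ (Fin d))‖ / 2)) /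
              (β * c * ‖(x : EuclideanSpace ℝ (Fin d))‖) ^ 3)) := by
            apply mul_le_mul_of_nonneg_left _ (by positivity)
            exact mul_le_mul_of_nonneg_left hstep2 (by norm_num)
        _ = M * Real.exp (-(β * c * ‖(x : EuclideanSpace ℝ (Fin d))‖ / 2)) := halg
        _ ≤ M * ∏ j, r ^ (((i x) j).natAbs) :=
            mul_le_mul_of_nonneg_left hprod hM0.le
        _ = G (i x) := rfl
  have hGiS : Summable (fun x : ↥(primSet d ∩ C1) => G (i x)) := hGS.comp_injective hinj
  have hmono : (∑' x : ↥(primSet d ∩ C1), G (i x)) ≤ ∑' v, G v :=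
    Summable.tsum_le_tsum_of_inj i hinj (fun v _ => hG0 v) (fun x => le_rfl) hGiS hGS
  have hchain : M * (6 / u) ^ d
      ≤ (192 * (1 / c) ^ 3 * (12 * (d : ℝ) / c) ^ d) * (β⁻¹) ^ (d + 3) := by
    apply le_of_eq
    have h6u : 6 / u = 12 * (d : ℝ) / c * β⁻¹ := by
      rw [hudef]
      field_simp
      ring
    have hMeq : M = 192 * (1 / c) ^ 3 * (β⁻¹) ^ 3 := by
      rw [hMdef]
      field_simp
    rw [h6u, hMeq, mul_pow, pow_add]
    ring
  have hβinv : (β⁻¹) ^ (d + 3)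
      = (zetaR d / zetaR (d + 1)) ^ (((d:ℝ)+3)/((d:ℝ)+1)) *
        (n : ℝ) ^ (((d:ℝ)+3)/((d:ℝ)+1)) := by
    have hbase0 : (0:ℝ) ≤ zetaR d * (n : ℝ) / zetaR (d + 1) := by positivity
    have h1 : β⁻¹ = (zetaR d * (n : ℝ) / zetaR (d + 1)) ^ ((1:ℝ)/((d:ℝ)+1)) := by
      rw [hβdef]
      unfold betaSeq
      rw [← Real.inv_rpow (by positivity : (0:ℝ) ≤ zetaR (d+1) / (zetaR d * (n:ℝ)))]
      rw [inv_div]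
    rw [h1, ← Real.rpow_natCast
        ((zetaR d * (n : ℝ) / zetaR (d + 1)) ^ ((1:ℝ)/((d:ℝ)+1))) (d + 3),
      ← Real.rpow_mul hbase0]
    rw [show ((1:ℝ)/((d:ℝ)+1)) * (((d + 3 : ℕ)) : ℝ) = ((d:ℝ)+3)/((d:ℝ)+1) by
      push_cast
      ring]
    rw [show zetaR d * (n : ℝ) / zetaR (d + 1) = (zetaR d / zetaR (d + 1)) * (n : ℝ) by ring]
    rw [Real.mul_rpow (by positivity) hnpos.le]
  have hnormg : ‖(n : ℝ) ^ (((d:ℝ)+3)/((d:ℝ)+1))‖ = (n : ℝ) ^ (((d:ℝ)+3)/((d:ℝ)+1)) := by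
    rw [Real.norm_eq_abs, abs_of_nonneg (Real.rpow_nonneg (Nat.cast_nonneg n) _)]
  rw [hnormg]
  refine le_trans (tsum_of_norm_bounded hGiS.hasSum fun x => ?_) ?_
  · rw [Real.norm_eq_abs, abs_of_nonneg (hterm x).1]
    exact (hterm x).2
  · refine le_trans hmono (le_trans hGle (le_trans hchain (le_of_eq ?_)))
    rw [hβinv]
    ring


end
end

section
/- For every complex number z with |z| < 1, the inequality |(1 − |z|)/(1 − z)| ≤ exp(Re(z) − |z|) holds. -/
open Complex

/-- Lower bound for `exp (-s)` on `[0,1]` by a degree-4 polynomial. -/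
lemma exp_neg_poly_lb {s : ℝ} (h0 : 0 ≤ s) (h1 : s ≤ 1) :
    1 - s + s ^ 2 / 2 - s ^ 3 / 6 - 5 / 96 * s ^ 4 ≤ Real.exp (-s) := by
  have habs : |(-s : ℝ)| ≤ 1 := by rw [abs_neg, _root_.abs_of_nonneg h0]; exact h1
  have h := Real.exp_bound habs (n := 4) (by norm_num)
  have hsum : ∑ m ∈ Finset.range 4, (-s) ^ m / (m.factorial : ℝ)
      = 1 - s + s ^ 2 / 2 - s ^ 3 / 6 := by
    simp [Finset.sum_range_succ, Nat.factorial]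
    ring
  rw [hsum, abs_neg, _root_.abs_of_nonneg h0] at h
  have h' := (abs_sub_le_iff.1 h).2
  have : (4:ℕ).succ = 5 := rfl
  norm_num [Nat.factorial] at h'
  nlinarith [h']

set_option maxHeartbeats 1000000 in
/-- Key real inequality: for `-r ≤ x ≤ r < 1`, `1 - r ≤ (1 - x) * exp (x - r)`. -/
lemma key_ineq {r x : ℝ} (hr1 : r < 1) (hxr : x ≤ r) (hxr' : -r ≤ x) :
    1 - r ≤ (1 - x) * Real.exp (x - r) := by
  set s : ℝ := (r - x) / 2 with hs
  have hs0 : 0 ≤ s := by simp [hs]; linarith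
  have hsr : s ≤ r := by simp [hs]; linarith
  have hs1 : s ≤ 1 := hsr.trans hr1.le
  have hL := exp_neg_poly_lb hs0 hs1
  have hcube : (0:ℝ) ≤ s ^ 3 := pow_nonneg hs0 3
  have hsq2 : s ^ 2 * (1 - s) ≥ 0 := mul_nonneg (sq_nonneg s) (by linarith)
  have hsq3 : s ^ 3 * (1 - s) ≥ 0 := mul_nonneg hcube (by linarith)
  have hL0 : 0 ≤ 1 - s + s ^ 2 / 2 - s ^ 3 / 6 - 5 / 96 * s ^ 4 := by
    nlinarith [hsq2, hsq3, sq_nonneg (3 * s - 16 / 3)]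
  have hL1 : 1 - s + s ^ 2 / 2 - s ^ 3 / 6 - 5 / 96 * s ^ 4 ≤ 1 := by
    nlinarith [hsq2, hcube, pow_nonneg hs0 4]
  have hq : (0:ℝ) ≤ 2/3 - 41/48*s + 5/12*s^2 - 25/288*s^3 - 1/144*s^4
      + 185/9216*s^5 + 25/9216*s^6 := by
    nlinarith [hsq2, hsq3, mul_nonneg (sq_nonneg s) hsq2, sq_nonneg (s - 4/3),
      pow_nonneg hs0 5, pow_nonneg hs0 6]
  have hC : (1 - s) * (1 - (1 - s + s ^ 2 / 2 - s ^ 3 / 6 - 5 / 96 * s ^ 4) ^ 2)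
      ≤ 2 * s * (1 - s + s ^ 2 / 2 - s ^ 3 / 6 - 5 / 96 * s ^ 4) ^ 2 := by
    linarith [mul_nonneg hcube hq]
  generalize hy : (1 - s + s ^ 2 / 2 - s ^ 3 / 6 - 5 / 96 * s ^ 4 : ℝ) = y
    at hL hL0 hL1 hC
  have hxs : x = r - 2 * s := by rw [hs]; ring
  have hexp : Real.exp (x - r) = Real.exp (-s) * Real.exp (-s) := by
    rw [← Real.exp_add]; congr 1; rw [hxs]; ring
  have hsq : y * y ≤ Real.exp (x - r) := by
    rw [hexp]; exact mul_le_mul hL hL hL0 (Real.exp_pos _).le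
  have h1x : 0 ≤ 1 - x := by rw [hxs]; linarith
  have hy2 : (0:ℝ) ≤ 1 - y ^ 2 := by nlinarith [hL0, hL1]
  have hmono : (1 - r) * (1 - y ^ 2) ≤ (1 - s) * (1 - y ^ 2) :=
    mul_le_mul_of_nonneg_right (by linarith) hy2
  have hthis := mul_le_mul_of_nonneg_left hsq h1x
  rw [hxs] at hthis
  nlinarith [hthis, hC, hmono]

/-- For every complex number `z` with `|z| < 1`,
`|(1 - |z|)/(1 - z)| ≤ exp(Re(z) - |z|)`. -/
theorem abs_one_sub_abs_div_one_sub_le {z : ℂ} (hz : ‖z‖ < 1) :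
    ‖(1 - (‖z‖ : ℂ)) / (1 - z)‖ ≤ Real.exp (z.re - ‖z‖) := by
  set r : ℝ := ‖z‖ with hr
  have hre : |z.re| ≤ r := Complex.abs_re_le_norm z
  have hre1 : z.re ≤ r := (abs_le.1 hre).2
  have hre2 : -r ≤ z.re := (abs_le.1 hre).1
  have hnum : ‖(1 - (r : ℂ))‖ = 1 - r := by
    rw [show (1 - (r:ℂ)) = ((1 - r : ℝ) : ℂ) by push_cast; ring, Complex.norm_real, Real.norm_eq_abs,
      _root_.abs_of_nonneg (by linarith)]
  have hden : 1 - z.re ≤ ‖(1 - z)‖ := by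
    have := Complex.re_le_norm (1 - z)
    simpa using this
  have hdenpos : 0 < ‖(1 - z)‖ := lt_of_lt_of_le (by linarith) hden
  rw [norm_div, hnum, div_le_iff₀ hdenpos]
  have hkey := key_ineq hz hre1 hre2
  have hmul : (1 - z.re) * Real.exp (z.re - r) ≤
      ‖(1 - z)‖ * Real.exp (z.re - r) :=
    mul_le_mul_of_nonneg_right hden (Real.exp_pos _).le
  linarith
end
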